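/- arXiv:1802.07528 — 4 statements merged into one kernel-verified Lean document; each statement's English description precedes it below -/
import Mathlib

section
/- If Z ~ χ²_k (chi-squared with k degrees of freedom), then for all 0 < t < 1, P(|Z/k − 1| ≥ t) ≤ 2 exp(−k t²/8). -/
open MeasureTheory ProbabilityTheory


open MeasureTheory ProbabilityTheory Real
open scoped NNReal ENNReal

-- Step 1: gaussian quadratic exponential integrability and integral
lemma gauss_sq_integrable {l : ℝ} (hl : l < 1/2) :
    Integrable (fun x : ℝ => Real.exp (l * x ^ 2)) (gaussianReal 0 1) := by
  rw [gaussianReal_of_var_ne_zero 0 one_ne_zero]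
  have hpdf : gaussianPDF 0 1 = fun x => ((Real.toNNReal (gaussianPDFReal 0 1 x) : ℝ≥0) : ℝ≥0∞) := by
    funext x; rfl
  rw [hpdf, integrable_withDensity_iff_integrable_smul]
  swap
  · exact (measurable_gaussianPDFReal 0 1).real_toNNReal
  simp only [NNReal.smul_def]
  have : (fun x : ℝ => (Real.toNNReal (gaussianPDFReal 0 1 x) : ℝ) • Real.exp (l * x ^ 2))
      = fun x : ℝ => (Real.sqrt (2 * π))⁻¹ * Real.exp (-(1/2 - l) * x ^ 2) := by
    funext x
    rw [smul_eq_mul, Real.coe_toNNReal _ (gaussianPDFReal_nonneg 0 1 x), gaussianPDFReal]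
    push_cast
    rw [mul_one, mul_assoc, ← Real.exp_add]
    ring_nf
  rw [this]
  exact (integrable_exp_neg_mul_sq (by linarith)).const_mul _

lemma gauss_sq_integral {l : ℝ} (hl : l < 1/2) :
    ∫ x, Real.exp (l * x ^ 2) ∂(gaussianReal 0 1) = (Real.sqrt (1 - 2 * l))⁻¹ := by
  rw [gaussianReal_of_var_ne_zero 0 one_ne_zero]
  have hpdf : gaussianPDF 0 1 = fun x => ((Real.toNNReal (gaussianPDFReal 0 1 x) : ℝ≥0) : ℝ≥0∞) := by
    funext x; rfl
  rw [hpdf, integral_withDensity_eq_integral_smul ((measurable_gaussianPDFReal 0 1).real_toNNReal)]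
  simp only [NNReal.smul_def]
  have : (fun x : ℝ => (Real.toNNReal (gaussianPDFReal 0 1 x) : ℝ) • Real.exp (l * x ^ 2))
      = fun x : ℝ => (Real.sqrt (2 * π))⁻¹ * Real.exp (-(1/2 - l) * x ^ 2) := by
    funext x
    rw [smul_eq_mul, Real.coe_toNNReal _ (gaussianPDFReal_nonneg 0 1 x), gaussianPDFReal]
    push_cast
    rw [mul_one, mul_assoc, ← Real.exp_add]
    ring_nf
  rw [this, integral_const_mul, integral_gaussian]
  have h1 : (0:ℝ) < 1/2 - l := by linarith
  have h2 : (0:ℝ) < 1 - 2*l := by linarith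
  rw [inv_mul_eq_div, ← Real.sqrt_div (by positivity), ← Real.sqrt_inv]
  congr 1
  have hpi := Real.pi_pos
  field_simp

lemma sqrt_inv_le_exp {l : ℝ} (hl : |l| ≤ 1/4) :
    (Real.sqrt (1 - 2 * l))⁻¹ ≤ Real.exp (l + 2 * l ^ 2) := by
  rw [abs_le] at hl
  have h2 : (0:ℝ) < 1 - 2*l := by linarith [hl.2]
  rw [inv_le_iff_one_le_mul₀ (by positivity)]
  have key : 1 ≤ (1 - 2*l) * Real.exp (l + 2*l^2) ^ 2 := by
    rw [← Real.exp_nat_mul]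
    have hx : (2:ℝ) * (l + 2*l^2) = 2*l + (2*l)^2 := by ring
    set u := 2*l with hu
    have hu1 : -(1/2:ℝ) ≤ u := by simp [hu]; linarith [hl.1]
    have hu2 : u ≤ 1/2 := by simp [hu]; linarith [hl.2]
    push_cast
    rw [hx]
    rcases le_or_gt u 0 with h | h
    · have := Real.add_one_le_exp (u + u^2)
      nlinarith [Real.exp_pos (u + u^2)]
    · have := Real.quadratic_le_exp_of_nonneg (by nlinarith : (0:ℝ) ≤ u + u^2)
      nlinarith [Real.exp_pos (u + u^2)]
  have h4 := Real.sqrt_le_sqrt key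
  rw [Real.sqrt_one, Real.sqrt_mul h2.le, Real.sqrt_sq (Real.exp_pos _).le] at h4
  linarith

/-- chi-squared concentration. If `Z = Σᵢ gᵢ²` for `k` i.i.d. standard
Gaussians `gᵢ`, then for all `0 < t < 1`,
`P(|Z/k - 1| ≥ t) ≤ 2 exp(-k t² / 8)`. -/
theorem chi_squared_tail_bound
    {Ω : Type*} [MeasurableSpace Ω] (P : Measure Ω) [IsProbabilityMeasure P]
    (k : ℕ) (hk : 0 < k) (g : Fin k → Ω → ℝ)
    (hmeas : ∀ i, Measurable (g i))
    (hindep : iIndepFun g P)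
    (hlaw : ∀ i, Measure.map (g i) P = gaussianReal 0 1)
    (Z : Ω → ℝ) (hZ : ∀ ω, Z ω = ∑ i, (g i ω) ^ 2)
    (t : ℝ) (ht0 : 0 < t) (ht1 : t < 1) :
    P {ω | t ≤ |Z ω / k - 1|} ≤ ENNReal.ofReal (2 * Real.exp (-((k : ℝ) * t ^ 2) / 8)) := by
  have hksq : ∀ i : Fin k, Measurable (fun ω => g i ω ^ 2) := fun i => (hmeas i).pow_const 2
  have hsqindep : iIndepFun (fun i => fun ω => g i ω ^ 2) P :=
    hindep.comp (fun _ x => x ^ 2) (fun _ => measurable_id.pow_const 2)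
  have hZeq : Z = ∑ i, (fun ω => g i ω ^ 2) := by
    funext ω; rw [hZ ω, Finset.sum_apply]
  -- per-coordinate integrability and mgf
  have hint : ∀ (l : ℝ), l < 1/2 → ∀ i : Fin k,
      Integrable (fun ω => Real.exp (l * g i ω ^ 2)) P := by
    intro l hl i
    have h1 := gauss_sq_integrable hl
    rw [← hlaw i] at h1
    exact (integrable_map_measure
      (((measurable_id.pow_const 2).const_mul l).exp.aestronglyMeasurable)
      (hmeas i).aemeasurable).mp h1
  have hmgf1 : ∀ (l : ℝ), l < 1/2 → ∀ i : Fin k,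
      mgf (fun ω => g i ω ^ 2) P l = (Real.sqrt (1 - 2 * l))⁻¹ := by
    intro l hl i
    have hmint := integral_map (μ := P) (φ := g i) (hmeas i).aemeasurable
      (f := fun x => Real.exp (l * x ^ 2))
      ((by fun_prop : Measurable fun x : ℝ => Real.exp (l * x ^ 2)).aestronglyMeasurable)
    rw [hlaw i, gauss_sq_integral hl] at hmint
    rw [mgf, ← hmint]
  -- mgf of Z
  have hintZ : ∀ (l : ℝ), l < 1/2 → Integrable (fun ω => Real.exp (l * Z ω)) P := by
    intro l hl
    rw [hZeq]
    exact hsqindep.integrable_exp_mul_sum hksq (fun i _ => hint l hl i)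
  have hmgfZ : ∀ (l : ℝ), |l| ≤ 1/4 → mgf Z P l ≤ Real.exp ((k : ℝ) * (l + 2 * l ^ 2)) := by
    intro l hl
    have hl2 : l < 1/2 := by rw [abs_le] at hl; linarith [hl.2]
    rw [hZeq, hsqindep.mgf_sum hksq]
    calc ∏ i : Fin k, mgf (fun ω => g i ω ^ 2) P l
        = ((Real.sqrt (1 - 2 * l))⁻¹) ^ k := by
          rw [Finset.prod_congr rfl (fun i _ => hmgf1 l hl2 i), Finset.prod_const,
            Finset.card_univ, Fintype.card_fin]
      _ ≤ (Real.exp (l + 2 * l ^ 2)) ^ k := by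
          apply pow_le_pow_left₀ (by positivity) (sqrt_inv_le_exp hl)
      _ = Real.exp ((k : ℝ) * (l + 2 * l ^ 2)) := by
          rw [← Real.exp_nat_mul]
  have hkpos : (0:ℝ) < k := Nat.cast_pos.mpr hk
  -- upper tail
  have hup : (P {ω | (k : ℝ) * (1 + t) ≤ Z ω}).toReal ≤ Real.exp (-((k : ℝ) * t ^ 2) / 8) := by
    have hc := measure_ge_le_exp_mul_mgf (μ := P) (X := Z) ((k : ℝ) * (1 + t))
      (by positivity : (0:ℝ) ≤ t/4) (hintZ (t/4) (by linarith))
    refine hc.trans ?_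
    calc Real.exp (-(t/4) * ((k : ℝ) * (1 + t))) * mgf Z P (t/4)
        ≤ Real.exp (-(t/4) * ((k : ℝ) * (1 + t))) * Real.exp ((k : ℝ) * (t/4 + 2 * (t/4) ^ 2)) := by
          apply mul_le_mul_of_nonneg_left (hmgfZ (t/4) (by rw [abs_of_pos (by positivity)]; linarith)) (Real.exp_pos _).le
      _ = Real.exp (-((k : ℝ) * t ^ 2) / 8) := by rw [← Real.exp_add]; ring_nf
  -- lower tail
  have hlo : (P {ω | Z ω ≤ (k : ℝ) * (1 - t)}).toReal ≤ Real.exp (-((k : ℝ) * t ^ 2) / 8) := by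
    have hc := measure_le_le_exp_mul_mgf (μ := P) (X := Z) ((k : ℝ) * (1 - t))
      (by linarith : -(t/4) ≤ 0) (hintZ (-(t/4)) (by linarith))
    refine hc.trans ?_
    calc Real.exp (-(-(t/4)) * ((k : ℝ) * (1 - t))) * mgf Z P (-(t/4))
        ≤ Real.exp (-(-(t/4)) * ((k : ℝ) * (1 - t))) * Real.exp ((k : ℝ) * (-(t/4) + 2 * (-(t/4)) ^ 2) : ℝ) := by
          apply mul_le_mul_of_nonneg_left (hmgfZ (-(t/4)) (by rw [abs_of_neg (by linarith)]; linarith)) (Real.exp_pos _).le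
      _ = Real.exp (-((k : ℝ) * t ^ 2) / 8) := by rw [← Real.exp_add]; ring_nf
  -- set inclusion
  have hsub : {ω | t ≤ |Z ω / k - 1|} ⊆
      {ω | (k : ℝ) * (1 + t) ≤ Z ω} ∪ {ω | Z ω ≤ (k : ℝ) * (1 - t)} := by
    intro ω hω
    simp only [Set.mem_setOf_eq] at hω
    rcases le_abs.mp hω with h | h
    · left
      simp only [Set.mem_setOf_eq]
      have : 1 + t ≤ Z ω / k := by linarith
      calc (k : ℝ) * (1 + t) ≤ (k : ℝ) * (Z ω / k) := by
            exact mul_le_mul_of_nonneg_left this hkpos.le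
        _ = Z ω := by field_simp
    · right
      simp only [Set.mem_setOf_eq]
      have : Z ω / k ≤ 1 - t := by linarith
      calc Z ω = (k : ℝ) * (Z ω / k) := by field_simp
        _ ≤ (k : ℝ) * (1 - t) := mul_le_mul_of_nonneg_left this hkpos.le
  calc P {ω | t ≤ |Z ω / k - 1|}
      ≤ P ({ω | (k : ℝ) * (1 + t) ≤ Z ω} ∪ {ω | Z ω ≤ (k : ℝ) * (1 - t)}) := measure_mono hsub
    _ ≤ P {ω | (k : ℝ) * (1 + t) ≤ Z ω} + P {ω | Z ω ≤ (k : ℝ) * (1 - t)} := measure_union_le _ _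
    _ ≤ ENNReal.ofReal (Real.exp (-((k : ℝ) * t ^ 2) / 8))
        + ENNReal.ofReal (Real.exp (-((k : ℝ) * t ^ 2) / 8)) := by
        gcongr
        · exact (ENNReal.le_ofReal_iff_toReal_le (measure_ne_top _ _) (Real.exp_pos _).le).mpr hup
        · exact (ENNReal.le_ofReal_iff_toReal_le (measure_ne_top _ _) (Real.exp_pos _).le).mpr hlo
    _ = ENNReal.ofReal (2 * Real.exp (-((k : ℝ) * t ^ 2) / 8)) := by
        rw [← ENNReal.ofReal_add (Real.exp_pos _).le (Real.exp_pos _).le, two_mul]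
end

section
/- (Rao's identity) Let Σ ∈ ℝ^{p×p} be symmetric positive definite, A ∈ ℝ^{p×n} of rank n, and B ∈ ℝ^{p×(p−n)} of rank p−n with AᵀB = 0. Then Σ = B(BᵀΣ⁻¹B)⁻¹Bᵀ + ΣA(AᵀΣA)⁻¹AᵀΣ. -/
open Matrix

/-- A matrix of full column rank has injective `mulVec`. -/
lemma rao_aux_inj {m n : ℕ} (M : Matrix (Fin m) (Fin n) ℝ) (h : M.rank = n) :
    Function.Injective M.mulVec := by
  have hker : LinearMap.ker M.mulVecLin = ⊥ := by
    have h1 := LinearMap.finrank_range_add_finrank_ker M.mulVecLin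
    rw [show Module.finrank ℝ (LinearMap.range M.mulVecLin) = n from h,
      show Module.finrank ℝ (Fin n → ℝ) = n by simp] at h1
    have : Module.finrank ℝ (LinearMap.ker M.mulVecLin) = 0 := by omega
    exact Submodule.finrank_eq_zero.mp this
  exact LinearMap.ker_eq_bot.mp hker

/-- Conjugating a positive definite matrix by an injective matrix gives a
positive definite matrix. -/
lemma rao_aux_posdef {m n : ℕ} {S : Matrix (Fin m) (Fin m) ℝ} (hS : S.PosDef)
    (M : Matrix (Fin m) (Fin n) ℝ) (hM : Function.Injective M.mulVec) :
    (Mᵀ * S * M).PosDef := by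
  rw [posDef_iff_dotProduct_mulVec]
  constructor
  · have hSh : Sᵀ = S := hS.isHermitian
    show (Mᵀ * S * M)ᴴ = Mᵀ * S * M
    simp only [conjTranspose_eq_transpose_of_trivial, transpose_mul, transpose_transpose, hSh,
      Matrix.mul_assoc]
  · intro x hx
    have hMx : M *ᵥ x ≠ 0 := by
      intro h0
      exact hx (hM (by simpa using h0))
    have := hS.dotProduct_mulVec_pos hMx
    have key : star x ⬝ᵥ ((Mᵀ * S * M) *ᵥ x) = star (M *ᵥ x) ⬝ᵥ (S *ᵥ (M *ᵥ x)) := by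
      simp only [star_trivial, ← mulVec_mulVec, dotProduct_mulVec _ Mᵀ, vecMul_transpose]
    rw [key]
    exact this

/-- Rao's identity: for symmetric positive definite `Σ`, `A` of full column
rank `n`, `B` of full column rank `p - n` with `AᵀB = 0`,
`Σ = B(BᵀΣ⁻¹B)⁻¹Bᵀ + ΣA(AᵀΣA)⁻¹AᵀΣ`. -/
theorem rao_identity
    (p n : ℕ) (hn : n ≤ p)
    (Sig : Matrix (Fin p) (Fin p) ℝ) (hSig : Sig.PosDef)
    (A : Matrix (Fin p) (Fin n) ℝ) (hA : A.rank = n)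
    (B : Matrix (Fin p) (Fin (p - n)) ℝ) (hB : B.rank = p - n)
    (hAB : Aᵀ * B = 0) :
    Sig = B * (Bᵀ * Sig⁻¹ * B)⁻¹ * Bᵀ + Sig * A * (Aᵀ * Sig * A)⁻¹ * Aᵀ * Sig := by
  have hAinj : Function.Injective A.mulVec := rao_aux_inj A hA
  have hBinj : Function.Injective B.mulVec := rao_aux_inj B hB
  have hSinv : Sig⁻¹.PosDef := hSig.inv
  have hASA : (Aᵀ * Sig * A).PosDef := rao_aux_posdef hSig A hAinj
  have hBSB : (Bᵀ * Sig⁻¹ * B).PosDef := rao_aux_posdef hSinv B hBinj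
  have hBA : Bᵀ * A = 0 := by
    have := congrArg transpose hAB
    simpa using this
  have hSS : Sig * Sig⁻¹ = 1 := mul_nonsing_inv _ (isUnit_iff_isUnit_det _ |>.mp hSig.isUnit)
  -- right-associated helper identities
  have hinvA : (Aᵀ * (Sig * A))⁻¹ * (Aᵀ * (Sig * A)) = 1 := by
    rw [show Aᵀ * (Sig * A) = Aᵀ * Sig * A by rw [Matrix.mul_assoc]]
    exact nonsing_inv_mul _ (isUnit_iff_isUnit_det _ |>.mp hASA.isUnit)
  have hinvB : (Bᵀ * (Sig⁻¹ * B))⁻¹ * (Bᵀ * (Sig⁻¹ * B)) = 1 := by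
    rw [show Bᵀ * (Sig⁻¹ * B) = Bᵀ * Sig⁻¹ * B by rw [Matrix.mul_assoc]]
    exact nonsing_inv_mul _ (isUnit_iff_isUnit_det _ |>.mp hBSB.isUnit)
  set R := B * (Bᵀ * Sig⁻¹ * B)⁻¹ * Bᵀ + Sig * A * (Aᵀ * Sig * A)⁻¹ * Aᵀ * Sig with hR
  set D := Sig - R with hD
  -- D kills A and Sig⁻¹ * B
  have hDA : D * A = 0 := by
    simp only [hD, hR, Matrix.sub_mul, Matrix.add_mul, Matrix.mul_assoc, hBA, Matrix.mul_zero,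
      hinvA, Matrix.mul_one, zero_add, sub_self]
  have hDB : D * (Sig⁻¹ * B) = 0 := by
    have h1 : Sig * (Sig⁻¹ * B) = B := by rw [← Matrix.mul_assoc, hSS, Matrix.one_mul]
    simp only [hD, hR, Matrix.sub_mul, Matrix.add_mul, Matrix.mul_assoc, h1, hinvB,
      Matrix.mul_one, hAB, Matrix.mul_zero, add_zero, sub_self]
  -- assemble the square matrix N = [A | Σ⁻¹B]
  have hpn : n + (p - n) = p := Nat.add_sub_cancel' hn
  let e : Fin n ⊕ Fin (p - n) ≃ Fin p := finSumFinEquiv.trans (finCongr hpn)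
  set N : Matrix (Fin p) (Fin p) ℝ :=
    (fromCols A (Sig⁻¹ * B)).submatrix id e.symm with hN
  have hDN : D * N = 0 := by
    have : D * fromCols A (Sig⁻¹ * B) = 0 := by
      rw [mul_fromCols, hDA, hDB, fromCols_zero]
    calc D * N = (D.submatrix id id) * ((fromCols A (Sig⁻¹ * B)).submatrix id e.symm) := by
              rw [Matrix.submatrix_id_id]
      _ = (D * fromCols A (Sig⁻¹ * B)).submatrix id ⇑e.symm :=
              (submatrix_mul D (fromCols A (Sig⁻¹ * B)) id id ⇑e.symm
                Function.bijective_id).symm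
      _ = 0 := by rw [this]; simp
  -- N is invertible
  have hNker : ∀ v, N *ᵥ v = 0 → v = 0 := by
      intro v hv
      rw [hN, submatrix_mulVec_equiv] at hv
      have hv' : fromCols A (Sig⁻¹ * B) *ᵥ (v ∘ e) = 0 := by
        funext i; exact congrFun hv i
      have hsum : fromCols A (Sig⁻¹ * B) *ᵥ
          Sum.elim ((v ∘ e) ∘ Sum.inl) ((v ∘ e) ∘ Sum.inr) = 0 := by
        rwa [Sum.elim_comp_inl_inr]
      rw [fromCols_mulVec_sumElim] at hsum
      set v₁ := (v ∘ e) ∘ Sum.inl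
      set v₂ := (v ∘ e) ∘ Sum.inr
      -- multiply by Bᵀ
      have h2 : (Bᵀ * Sig⁻¹ * B) *ᵥ v₂ = 0 := by
        have := congrArg (fun w => Bᵀ *ᵥ w) hsum
        simpa [mulVec_add, mulVec_mulVec, ← Matrix.mul_assoc, hBA] using this
      have hv₂ : v₂ = 0 := by
        have hinj : Function.Injective (Bᵀ * Sig⁻¹ * B).mulVec :=
          mulVec_injective_iff_isUnit.mpr hBSB.isUnit
        apply hinj
        simpa using h2
      rw [hv₂, mulVec_zero, add_zero] at hsum
      have hv₁ : v₁ = 0 := hAinj (by simpa using hsum)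
      -- conclude v = 0
      funext i
      have hve : v ∘ ⇑e = 0 := by
        funext j
        cases j with
        | inl a => exact congrFun hv₁ a
        | inr b => exact congrFun hv₂ b
      have := congrFun hve (e.symm i)
      simpa using this
  have hNinj : Function.Injective N.mulVec := by
    intro x y hxy
    have h0 : N *ᵥ (x - y) = 0 := by rw [mulVec_sub, hxy, sub_self]
    exact sub_eq_zero.mp (hNker _ h0)
  have hNunit : IsUnit N := mulVec_injective_iff_isUnit.mp hNinj
  have hD0 : D = 0 := by
    have hNN : N * N⁻¹ = 1 := mul_nonsing_inv _ (isUnit_iff_isUnit_det _ |>.mp hNunit)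
    calc D = D * (N * N⁻¹) := by rw [hNN, Matrix.mul_one]
      _ = (D * N) * N⁻¹ := by rw [Matrix.mul_assoc]
      _ = 0 := by rw [hDN, Matrix.zero_mul]
  have := sub_eq_zero.mp hD0
  exact this
end

section
/- Under the same setup ([S S⊥] orthogonal, Σ symmetric positive definite), det(S⊥ᵀΣS⊥) = det(Σ)·det(SᵀΣ⁻¹S). -/
open Matrix

/-- for symmetric positive definite `Σ` and `[S S⊥]` orthogonal,
`det(S⊥ᵀΣS⊥) = det(Σ)·det(SᵀΣ⁻¹S)`. -/
theorem det_orthogonal_complement_identity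
    (p m : ℕ) (hm : m ≤ p)
    (Sig : Matrix (Fin p) (Fin p) ℝ) (hSig : Sig.PosDef)
    (S : Matrix (Fin p) (Fin m) ℝ) (Sperp : Matrix (Fin p) (Fin (p - m)) ℝ)
    (hS : Sᵀ * S = 1) (hSp : Sperpᵀ * Sperp = 1) (hortho : Sᵀ * Sperp = 0)
    (hcomplete : S * Sᵀ + Sperp * Sperpᵀ = 1) :
    (Sperpᵀ * Sig * Sperp).det = Sig.det * (Sᵀ * Sig⁻¹ * S).det := by
  have hdet : Sig.det ≠ 0 := ne_of_gt hSig.det_pos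
  have hinv : IsUnit Sig.det := isUnit_iff_ne_zero.mpr hdet
  have hortho' : Sperpᵀ * S = 0 := by
    have := congrArg Matrix.transpose hortho
    simpa using this
  set e : Fin (p - m) ⊕ Fin m ≃ Fin p :=
    finSumFinEquiv.trans (finCongr (Nat.sub_add_cancel hm)) with he
  set Q : Matrix (Fin p) (Fin (p - m) ⊕ Fin m) ℝ := fromCols Sperp S with hQ
  set N : Matrix (Fin p) (Fin (p - m) ⊕ Fin m) ℝ := fromCols (Sig * Sperp) S with hN
  have h1 : Qᵀ * N = fromBlocks (Sperpᵀ * Sig * Sperp) 0 (Sᵀ * Sig * Sperp) 1 := by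
    rw [hQ, hN, transpose_fromCols, fromRows_mul_fromCols]
    rw [← Matrix.mul_assoc, ← Matrix.mul_assoc, hS, hortho']
  have h2 : Qᵀ * (Sig⁻¹ * N) =
      fromBlocks 1 (Sperpᵀ * Sig⁻¹ * S) 0 (Sᵀ * Sig⁻¹ * S) := by
    have hNinv : Sig⁻¹ * N = fromCols Sperp (Sig⁻¹ * S) := by
      rw [hN, mul_fromCols, ← Matrix.mul_assoc, nonsing_inv_mul _ hinv, Matrix.one_mul]
    rw [hQ, hNinv, transpose_fromCols, fromRows_mul_fromCols]
    rw [hSp, ← Matrix.mul_assoc, ← Matrix.mul_assoc, hortho]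
  -- determinants via reindexing
  have key1 : (Qᵀ.submatrix e.symm id).det * (N.submatrix id e.symm).det =
      (Sperpᵀ * Sig * Sperp).det := by
    rw [← det_mul, ← submatrix_mul _ _ _ _ _ Function.bijective_id,
      det_submatrix_equiv_self, h1, det_fromBlocks_zero₁₂, det_one, mul_one]
  have key2 : (Qᵀ.submatrix e.symm id).det * ((Sig⁻¹ * N).submatrix id e.symm).det =
      (Sᵀ * Sig⁻¹ * S).det := by
    rw [← det_mul, ← submatrix_mul _ _ _ _ _ Function.bijective_id,
      det_submatrix_equiv_self, h2, det_fromBlocks_zero₂₁, det_one, one_mul]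
  have key3 : ((Sig⁻¹ * N).submatrix id e.symm).det =
      Sig.det⁻¹ * (N.submatrix id e.symm).det := by
    have : (Sig⁻¹ * N).submatrix id e.symm = Sig⁻¹ * N.submatrix id e.symm := by
      rw [submatrix_mul _ _ id id e.symm Function.bijective_id, submatrix_id_id]
    rw [this, det_mul, det_nonsing_inv, Ring.inverse_eq_inv]
  rw [← key1, ← key2, key3]
  field_simp
end

section
/- Let M, N ∈ ℝ^{n×n} be symmetric positive definite and m ≤ n. Among full-rank matrices S ∈ ℝ^{n×m}, the minimum of det(SᵀMS)/det(SᵀNS) is attained when the column space of S equals the span of the m leading eigenvectors of M⁻¹N, and the minimum value is the reciprocal of the product of the m largest eigenvalues of M^{-1/2} N M^{-1/2}. -/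
open Matrix
variable {n m : ℕ}

noncomputable def cterm (W : Matrix (Fin n) (Fin m) ℝ) (f : Fin m → Fin n) : ℝ :=
  (∏ j, W (f j) j) * (Matrix.of fun j k => W (f j) k).det

lemma expand (W : Matrix (Fin n) (Fin m) ℝ) (d : Fin n → ℝ) :
    (Wᵀ * diagonal d * W).det =
      ∑ f : Fin m → Fin n, (∏ j, d (f j)) * cterm W f := by
  set F := (detRowAlternating : (Fin m → ℝ) [⋀^Fin m]→ₗ[ℝ] ℝ).toMultilinearMap with hF
  have h2 : (Wᵀ * diagonal d * W).det =
      F (fun j => ∑ i : Fin n, (d i * W i j) • (fun k => W i k)) := by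
    show (Wᵀ * diagonal d * W).det = detRowAlternating _
    unfold Matrix.det
    congr 1
    ext j k
    simp [Matrix.mul_apply, diagonal, mul_comm, mul_assoc, Finset.sum_apply]
  rw [h2, F.map_sum]
  refine Finset.sum_congr rfl fun f _ => ?_
  rw [F.map_smul_univ (fun j => d (f j) * W (f j) j) (fun j => (fun k => W (f j) k))]
  have : F (fun j => (fun k => W (f j) k)) = (Matrix.of fun j k => W (f j) k).det := rfl
  rw [this]
  simp only [cterm, Finset.prod_mul_distrib, smul_eq_mul]
  ring

lemma cterm_not_inj (W : Matrix (Fin n) (Fin m) ℝ) {f : Fin m → Fin n}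
    (hf : ¬ Function.Injective f) : cterm W f = 0 := by
  obtain ⟨i, j, hij, hne⟩ : ∃ i j, f i = f j ∧ i ≠ j := by
    simp only [Function.Injective, not_forall] at hf
    obtain ⟨i, j, h1, h2⟩ := hf; exact ⟨i, j, h1, h2⟩
  have : (Matrix.of fun j k => W (f j) k).det = 0 :=
    Matrix.det_zero_of_row_eq hne (by ext k; simp [hij])
  simp [cterm, this]

lemma fiber_sum (W : Matrix (Fin n) (Fin m) ℝ) (d : Fin n → ℝ)
    {g : Fin m → Fin n} (hg : StrictMono g) :
    ∑ σ : Equiv.Perm (Fin m), (∏ j, d ((g ∘ σ) j)) * cterm W (g ∘ σ) =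
      (∏ j, d (g j)) * ((Matrix.of fun j k => W (g j) k).det)^2 := by
  have hprod : ∀ σ : Equiv.Perm (Fin m), (∏ j, d ((g ∘ σ) j)) = ∏ j, d (g j) := by
    intro σ
    exact Equiv.prod_comp σ (fun j => d (g j))
  have hdet : ∀ σ : Equiv.Perm (Fin m),
      (Matrix.of fun j k => W (g (σ j)) k).det =
        (Equiv.Perm.sign σ : ℤ) * (Matrix.of fun j k => W (g j) k).det := by
    intro σ
    have := Matrix.det_permute σ (Matrix.of fun j k => W (g j) k)
    exact this
  have hexp : (Matrix.of fun j k => W (g j) k).det =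
      ∑ σ : Equiv.Perm (Fin m), ((Equiv.Perm.sign σ : ℤ) : ℝ) * ∏ j, W (g (σ j)) j := by
    rw [Matrix.det_apply']
    rfl
  calc ∑ σ : Equiv.Perm (Fin m), (∏ j, d ((g ∘ σ) j)) * cterm W (g ∘ σ)
      = ∑ σ : Equiv.Perm (Fin m), (∏ j, d (g j)) *
          ((((Equiv.Perm.sign σ : ℤ) : ℝ) * ∏ j, W (g (σ j)) j) *
            (Matrix.of fun j k => W (g j) k).det) := by
        refine Finset.sum_congr rfl fun σ _ => ?_
        rw [hprod σ]
        unfold cterm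
        rw [show (Matrix.of fun j k => W ((g ∘ σ) j) k).det =
            ((Equiv.Perm.sign σ : ℤ) : ℝ) * (Matrix.of fun j k => W (g j) k).det by
          simpa using hdet σ]
        simp only [Function.comp]
        ring
    _ = (∏ j, d (g j)) * ((Matrix.of fun j k => W (g j) k).det)^2 := by
        have hre : ∀ σ : Equiv.Perm (Fin m),
            (∏ j, d (g j)) * ((((Equiv.Perm.sign σ : ℤ) : ℝ) * ∏ j, W (g (σ j)) j) *
              (Matrix.of fun j k => W (g j) k).det) =
            ((∏ j, d (g j)) * (Matrix.of fun j k => W (g j) k).det) *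
              (((Equiv.Perm.sign σ : ℤ) : ℝ) * ∏ j, W (g (σ j)) j) := fun σ => by ring
        simp_rw [hre]
        rw [← Finset.mul_sum, ← hexp]
        ring

lemma group_sum (W : Matrix (Fin n) (Fin m) ℝ) (d : Fin n → ℝ) :
    ∑ f : Fin m → Fin n, (∏ j, d (f j)) * cterm W f =
      ∑ g ∈ Finset.univ.filter (fun g : Fin m → Fin n => StrictMono g),
        (∏ j, d (g j)) * ((Matrix.of fun j k => W (g j) k).det)^2 := by
  classical
  have h1 : ∑ f : Fin m → Fin n, (∏ j, d (f j)) * cterm W f =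
      ∑ f ∈ Finset.univ.filter (fun f : Fin m → Fin n => Function.Injective f),
        (∏ j, d (f j)) * cterm W f := by
    rw [Finset.sum_filter]
    refine Finset.sum_congr rfl fun f _ => ?_
    by_cases hf : Function.Injective f
    · simp [hf]
    · simp [hf, cterm_not_inj W hf]
  rw [h1]
  have h2 : ∑ f ∈ Finset.univ.filter (fun f : Fin m → Fin n => Function.Injective f),
      (∏ j, d (f j)) * cterm W f =
      ∑ p ∈ (Finset.univ.filter (fun g : Fin m → Fin n => StrictMono g)) ×ˢ
          (Finset.univ : Finset (Equiv.Perm (Fin m))),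
        (∏ j, d ((p.1 ∘ p.2) j)) * cterm W (p.1 ∘ p.2) := by
    refine Finset.sum_nbij'
      (fun f => ((f ∘ Tuple.sort f, (Tuple.sort f)⁻¹) :
        (Fin m → Fin n) × Equiv.Perm (Fin m)))
      (fun p => p.1 ∘ p.2) ?_ ?_ ?_ ?_ ?_
    · -- image membership: f ∘ sort f is strictMono when f injective
      intro f hf
      have hf' : Function.Injective f := (Finset.mem_filter.mp hf).2
      refine Finset.mem_product.mpr ⟨Finset.mem_filter.mpr ⟨Finset.mem_univ _, ?_⟩,
        Finset.mem_univ _⟩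
      have hmono : Monotone (f ∘ Tuple.sort f) := Tuple.monotone_sort f
      have hinj : Function.Injective (f ∘ Tuple.sort f) :=
        hf'.comp (Tuple.sort f).injective
      exact hmono.strictMono_of_injective hinj
    · intro p hp
      have hp1 : StrictMono p.1 :=
        (Finset.mem_filter.mp (Finset.mem_product.mp hp).1).2
      exact Finset.mem_filter.mpr ⟨Finset.mem_univ _,
        hp1.injective.comp p.2.injective⟩
    · -- left inverse
      intro f hf
      ext k
      simp
    · -- right inverse
      intro p hp
      have hp1 : StrictMono p.1 :=
        (Finset.mem_filter.mp (Finset.mem_product.mp hp).1).2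
      obtain ⟨g, σ⟩ := p
      have hsort : Tuple.sort (g ∘ σ) = σ⁻¹ := by
        symm
        rw [Tuple.eq_sort_iff]
        constructor
        · have : (g ∘ ⇑σ) ∘ ⇑σ⁻¹ = g := by
            ext k; simp
          rw [this]
          exact hp1.monotone
        · intro i j hij hfe
          exfalso
          have : (σ⁻¹ : Equiv.Perm (Fin m)) i = σ⁻¹ j :=
            σ.injective (hp1.injective hfe)
          exact hij.ne (σ⁻¹.injective this)
      simp only [hsort]
      have hc : (g ∘ ⇑σ) ∘ ⇑σ⁻¹ = g := by ext k; simp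
      simp [hc]
      exact hc
    · intro f hf
      have hcomp : (f ∘ ⇑(Tuple.sort f)) ∘ ⇑(Tuple.sort f)⁻¹ = f := by ext k; simp
      simp only []
      rw [hcomp]
  rw [h2, Finset.sum_product]
  refine Finset.sum_congr rfl fun g hg => ?_
  exact fiber_sum W d (Finset.mem_filter.mp hg).2

lemma strictMono_le_apply {g : Fin m → Fin n} (hg : StrictMono g) (j : Fin m) :
    (j : ℕ) ≤ (g j : ℕ) := by
  obtain ⟨k, hk⟩ := j
  induction k with
  | zero => simp
  | succ k ih =>
    have hk' : k < m := Nat.lt_of_succ_lt hk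
    have h1 := ih hk'
    have hlt : g ⟨k, hk'⟩ < g ⟨k + 1, hk⟩ := hg (by simp [Fin.lt_def])
    rw [Fin.lt_def] at hlt
    simp only [Fin.val_mk] at h1 hlt ⊢
    omega

lemma key_ineq (hm : m ≤ n) (W : Matrix (Fin n) (Fin m) ℝ) (d : Fin n → ℝ)
    (hpos : ∀ i, 0 < d i) (hanti : ∀ i j : Fin n, i ≤ j → d j ≤ d i) :
    (Wᵀ * diagonal d * W).det ≤ (∏ j : Fin m, d (Fin.castLE hm j)) * (Wᵀ * W).det := by
  have hWW : (Wᵀ * W).det =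
      ∑ g ∈ Finset.univ.filter (fun g : Fin m → Fin n => StrictMono g),
        ((Matrix.of fun j k => W (g j) k).det)^2 := by
    have h1 : Wᵀ * W = Wᵀ * diagonal (fun _ : Fin n => (1:ℝ)) * W := by
      simp
    rw [h1, expand W (fun _ => (1:ℝ)), group_sum W (fun _ => (1:ℝ))]
    simp
  rw [expand, group_sum, hWW, Finset.mul_sum]
  refine Finset.sum_le_sum fun g hg => ?_
  have hgs : StrictMono g := (Finset.mem_filter.mp hg).2
  refine mul_le_mul_of_nonneg_right ?_ (sq_nonneg _)
  refine Finset.prod_le_prod (fun j _ => (hpos _).le) fun j _ => ?_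
  refine hanti _ _ ?_
  rw [Fin.le_def]
  exact strictMono_le_apply hgs j

lemma posdef_conj_rect {n m : ℕ} (P : Matrix (Fin n) (Fin n) ℝ) (hP : P.PosDef)
    (S : Matrix (Fin n) (Fin m) ℝ) (hS : ∀ x, S *ᵥ x = 0 → x = 0) :
    (Sᵀ * P * S).PosDef := by
  have hPt : Pᵀ = P := hP.1
  refine posDef_iff_dotProduct_mulVec.mpr ⟨?_, ?_⟩
  · show (Sᵀ * P * S)ᴴ = _
    have : (Sᵀ * P * S)ᴴ = (Sᵀ * P * S)ᵀ := by
      ext i j; simp [conjTranspose_apply]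
    rw [this]
    rw [Matrix.transpose_mul, Matrix.transpose_mul, Matrix.transpose_transpose, hPt]
    rw [Matrix.mul_assoc]
  · intro x hx
    have hx' : S *ᵥ x ≠ 0 := fun h => hx (hS x h)
    have key := hP.dotProduct_mulVec_pos hx'
    simp only [star_trivial] at key ⊢
    calc (0:ℝ) < (S *ᵥ x) ⬝ᵥ (P *ᵥ (S *ᵥ x)) := key
      _ = x ⬝ᵥ ((Sᵀ * P * S) *ᵥ x) := by
          rw [← Matrix.mulVec_mulVec, ← Matrix.mulVec_mulVec,
            Matrix.dotProduct_mulVec x Sᵀ, Matrix.vecMul_transpose]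



/-- for symmetric positive definite `M`, `N`, the minimum over full-rank
`S ∈ ℝ^{n×m}` of `det(SᵀMS)/det(SᵀNS)` equals the reciprocal of the product of the `m`
largest eigenvalues `μ₁ ≥ ⋯ ≥ μₙ` of `M^{-1/2} N M^{-1/2}` (with orthonormal eigenvectors
`vᵢ`), and is attained at `S★ = M^{-1/2}[v₁ ⋯ v_m]`, whose columns `M^{-1/2}vⱼ` are
eigenvectors of `M⁻¹N` for the leading eigenvalues. -/
theorem det_quotient_minimizer
    (n m : ℕ) (hm : m ≤ n)
    (M N : Matrix (Fin n) (Fin n) ℝ) (hM : M.PosDef) (hN : N.PosDef)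
    (R : Matrix (Fin n) (Fin n) ℝ) (hR : R.PosDef) (hRR : R * R = M)
    (μ : Fin n → ℝ) (v : Fin n → Fin n → ℝ)
    (hortho : ∀ i j, v i ⬝ᵥ v j = if i = j then 1 else 0)
    (heig : ∀ i, (R⁻¹ * N * R⁻¹) *ᵥ v i = μ i • v i)
    (hsorted : ∀ i j, i ≤ j → μ j ≤ μ i)
    (Sstar : Matrix (Fin n) (Fin m) ℝ)
    (hSstar : Sstar = R⁻¹ * Matrix.of (fun i (j : Fin m) => v (Fin.castLE hm j) i)) :
    (∀ S : Matrix (Fin n) (Fin m) ℝ, S.rank = m →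
      (∏ j : Fin m, μ (Fin.castLE hm j))⁻¹ ≤ (Sᵀ * M * S).det / (Sᵀ * N * S).det) ∧
    (Sstarᵀ * M * Sstar).det / (Sstarᵀ * N * Sstar).det =
      (∏ j : Fin m, μ (Fin.castLE hm j))⁻¹ ∧
    (∀ j : Fin m, (M⁻¹ * N) *ᵥ (R⁻¹ *ᵥ v (Fin.castLE hm j)) =
      μ (Fin.castLE hm j) • (R⁻¹ *ᵥ v (Fin.castLE hm j))) := by
  classical
  have hRdet : IsUnit R.det := isUnit_iff_ne_zero.mpr (ne_of_gt hR.det_pos)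
  have hRinvR : R⁻¹ * R = 1 := nonsing_inv_mul R hRdet
  have hRRinv : R * R⁻¹ = 1 := mul_nonsing_inv R hRdet
  have hRsym : Rᵀ = R := by
    have h1 : Rᵀ = Rᴴ := by ext i j; simp [conjTranspose_apply]
    rw [h1]; exact hR.1
  have hRinvsym : R⁻¹ᵀ = R⁻¹ := by rw [Matrix.transpose_nonsing_inv, hRsym]
  have hRinv0 : ∀ x : Fin n → ℝ, R⁻¹ *ᵥ x = 0 → x = 0 := by
    intro x hx
    have : R *ᵥ (R⁻¹ *ᵥ x) = x := by
      rw [Matrix.mulVec_mulVec, hRRinv, Matrix.one_mulVec]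
    rw [hx, Matrix.mulVec_zero] at this
    exact this.symm
  set A := R⁻¹ * N * R⁻¹ with hAdef
  have hApos : A.PosDef := by
    have := posdef_conj_rect N hN R⁻¹ hRinv0
    rwa [hRinvsym] at this
  -- eigenvectors nonzero, eigenvalues positive
  have hvne : ∀ i, v i ≠ 0 := by
    intro i h
    have := hortho i i
    rw [h] at this
    simp at this
  have hμpos : ∀ i, 0 < μ i := by
    intro i
    have h1 := hApos.dotProduct_mulVec_pos (hvne i)
    simp only [star_trivial] at h1
    rw [heig i] at h1
    have h2 : v i ⬝ᵥ (μ i • v i) = μ i := by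
      rw [dotProduct_smul, smul_eq_mul, hortho i i]
      simp
    rwa [h2] at h1
  -- orthogonal matrix V
  set V : Matrix (Fin n) (Fin n) ℝ := Matrix.of (fun i j => v j i) with hVdef
  have hVV : Vᵀ * V = 1 := by
    ext i j
    simp only [Matrix.mul_apply, transpose_apply, hVdef, Matrix.of_apply, Matrix.one_apply]
    exact hortho i j
  have hVVt : V * Vᵀ = 1 := mul_eq_one_comm.mp hVV
  have hAV : A * V = V * diagonal μ := by
    ext i j
    have h1 : (A *ᵥ v j) i = μ j * v j i := by rw [heig j]; simp
    have h2 : (A * V) i j = (A *ᵥ v j) i := by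
      simp [Matrix.mul_apply, Matrix.mulVec, dotProduct, hVdef]
    rw [h2, h1]
    simp [Matrix.mul_apply, diagonal, hVdef, Finset.sum_ite_eq, mul_comm]
  have hAVV : A = V * diagonal μ * Vᵀ := by
    have h1 : A * (V * Vᵀ) = V * diagonal μ * Vᵀ := by
      rw [← Matrix.mul_assoc, hAV]
    rw [hVVt, Matrix.mul_one] at h1
    exact h1
  -- part 3
  have part3 : ∀ j : Fin m, (M⁻¹ * N) *ᵥ (R⁻¹ *ᵥ v (Fin.castLE hm j)) =
      μ (Fin.castLE hm j) • (R⁻¹ *ᵥ v (Fin.castLE hm j)) := by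
    intro j
    have hMinv : M⁻¹ = R⁻¹ * R⁻¹ := by rw [← hRR, Matrix.mul_inv_rev]
    rw [Matrix.mulVec_mulVec, hMinv]
    have : R⁻¹ * R⁻¹ * N * R⁻¹ = R⁻¹ * A := by
      simp only [hAdef, Matrix.mul_assoc]
    calc (R⁻¹ * R⁻¹ * N * R⁻¹) *ᵥ v (Fin.castLE hm j)
        = (R⁻¹ * A) *ᵥ v (Fin.castLE hm j) := by rw [this]
      _ = R⁻¹ *ᵥ (A *ᵥ v (Fin.castLE hm j)) := by rw [Matrix.mulVec_mulVec]
      _ = R⁻¹ *ᵥ (μ (Fin.castLE hm j) • v (Fin.castLE hm j)) := by rw [heig]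
      _ = μ (Fin.castLE hm j) • (R⁻¹ *ᵥ v (Fin.castLE hm j)) := by
          rw [Matrix.mulVec_smul]
  -- part 2
  set Vm : Matrix (Fin n) (Fin m) ℝ :=
    Matrix.of (fun i (j : Fin m) => v (Fin.castLE hm j) i) with hVmdef
  have hVmVm : Vmᵀ * Vm = 1 := by
    ext j k
    simp only [Matrix.mul_apply, transpose_apply, hVmdef, Matrix.of_apply, Matrix.one_apply]
    have := hortho (Fin.castLE hm j) (Fin.castLE hm k)
    rw [dotProduct] at this
    rw [this]
    by_cases h : j = k
    · simp [h]
    · rw [if_neg h, if_neg (fun hc => h (Fin.castLE_injective hm hc))]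
  have hAVm : A * Vm = Vm * diagonal (fun j : Fin m => μ (Fin.castLE hm j)) := by
    ext i j
    have h1 : (A *ᵥ v (Fin.castLE hm j)) i = μ (Fin.castLE hm j) * v (Fin.castLE hm j) i := by
      rw [heig]; simp
    have h2 : (A * Vm) i j = (A *ᵥ v (Fin.castLE hm j)) i := by
      simp [Matrix.mul_apply, Matrix.mulVec, dotProduct, hVmdef]
    rw [h2, h1]
    simp [Matrix.mul_apply, diagonal, hVmdef, Finset.sum_ite_eq, mul_comm]
  have hSM : Sstarᵀ * M * Sstar = 1 := by
    rw [hSstar, Matrix.transpose_mul, hRinvsym, ← hRR]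
    show Vmᵀ * R⁻¹ * (R * R) * (R⁻¹ * Vm) = 1
    simp only [Matrix.mul_assoc]
    rw [← Matrix.mul_assoc R R⁻¹ Vm, hRRinv, Matrix.one_mul,
        ← Matrix.mul_assoc R⁻¹ R Vm, hRinvR, Matrix.one_mul]
    exact hVmVm
  have hRAR : R * A * R = N := by
    rw [hAdef]
    simp only [Matrix.mul_assoc]
    rw [hRinvR, Matrix.mul_one, ← Matrix.mul_assoc, hRRinv, Matrix.one_mul]
  have hSN : Sstarᵀ * N * Sstar = diagonal (fun j : Fin m => μ (Fin.castLE hm j)) := by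
    rw [hSstar, Matrix.transpose_mul, hRinvsym, ← hRAR]
    show Vmᵀ * R⁻¹ * (R * A * R) * (R⁻¹ * Vm) = _
    simp only [Matrix.mul_assoc]
    rw [← Matrix.mul_assoc R R⁻¹ Vm, hRRinv, Matrix.one_mul,
        ← Matrix.mul_assoc R⁻¹ R (A * Vm), hRinvR, Matrix.one_mul,
        hAVm, ← Matrix.mul_assoc Vmᵀ Vm _, hVmVm, Matrix.one_mul]
  have hP : (0:ℝ) < ∏ j : Fin m, μ (Fin.castLE hm j) :=
    Finset.prod_pos fun j _ => hμpos _
  have part2 : (Sstarᵀ * M * Sstar).det / (Sstarᵀ * N * Sstar).det =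
      (∏ j : Fin m, μ (Fin.castLE hm j))⁻¹ := by
    rw [hSM, hSN, Matrix.det_one, Matrix.det_diagonal, one_div]
  -- part 1
  have part1 : ∀ S : Matrix (Fin n) (Fin m) ℝ, S.rank = m →
      (∏ j : Fin m, μ (Fin.castLE hm j))⁻¹ ≤ (Sᵀ * M * S).det / (Sᵀ * N * S).det := by
    intro S hrank
    have hS0 : ∀ x, S *ᵥ x = 0 → x = 0 := by
      have h1 := LinearMap.finrank_range_add_finrank_ker S.mulVecLin
      rw [show Module.finrank ℝ (LinearMap.range S.mulVecLin) = m from hrank] at h1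
      have h2 : Module.finrank ℝ (Fin m → ℝ) = m := by simp
      rw [h2] at h1
      have h3 : Module.finrank ℝ (LinearMap.ker S.mulVecLin) = 0 := by omega
      have h4 : LinearMap.ker S.mulVecLin = ⊥ := Submodule.finrank_eq_zero.mp h3
      intro x hx
      have : x ∈ LinearMap.ker S.mulVecLin := by
        rw [LinearMap.mem_ker, Matrix.mulVecLin_apply]; exact hx
      rw [h4] at this
      simpa using this
    have hMSpos : (Sᵀ * M * S).PosDef := posdef_conj_rect M hM S hS0
    have hNSpos : (Sᵀ * N * S).PosDef := posdef_conj_rect N hN S hS0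
    set W : Matrix (Fin n) (Fin m) ℝ := Vᵀ * (R * S) with hWdef
    have hWW : Wᵀ * W = Sᵀ * M * S := by
      rw [hWdef, Matrix.transpose_mul, Matrix.transpose_mul, hRsym]
      simp only [Matrix.mul_assoc, Matrix.transpose_transpose]
      rw [← Matrix.mul_assoc V Vᵀ (R * S), hVVt, Matrix.one_mul, ← hRR]
      simp only [Matrix.mul_assoc]
    have hWD : Wᵀ * diagonal μ * W = Sᵀ * N * S := by
      rw [hWdef, Matrix.transpose_mul, Matrix.transpose_mul, hRsym, ← hRAR, hAVV]
      simp only [Matrix.mul_assoc, Matrix.transpose_transpose]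
    have hkey := key_ineq hm W μ hμpos hsorted
    rw [hWW, hWD] at hkey
    rw [le_div_iff₀ hNSpos.det_pos, inv_mul_le_iff₀ hP]
    exact hkey
  exact ⟨part1, part2, part3⟩
end
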